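/- For every 4-connected configuration C and every cell p=(a,b) of C, C admits a closed embroidery whose first diagonal is the inferior diagonal of p traversed from (a,b) to (a+1,b+1); in particular, a 4-connected configuration can be embroidered with minimal thread starting from any one of its cells. -/

import Mathlib

/-- Two vertices of `ℤ²` are adjacent if their Euclidean distance is `1`. -/
def Adj (u v : ℤ × ℤ) : Prop := (u.1 - v.1) ^ 2 + (u.2 - v.2) ^ 2 = 1

/-- The inferior diagonal of the cell `(a, b)`: the unordered pair `{(a,b), (a+1,b+1)}`. -/
def infDiag (c : ℤ × ℤ) : Sym2 (ℤ × ℤ) := s(c, (c.1 + 1, c.2 + 1))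

/-- The superior diagonal of the cell `(a, b)`: the unordered pair `{(a,b+1), (a+1,b)}`. -/
def supDiag (c : ℤ × ℤ) : Sym2 (ℤ × ℤ) := s((c.1, c.2 + 1), (c.1 + 1, c.2))

/-- The unordered pair underlying an ordered pair of vertices. -/
def diagOf (e : (ℤ × ℤ) × (ℤ × ℤ)) : Sym2 (ℤ × ℤ) := s(e.1, e.2)

/-- `d 0, d 1, …, d (2n - 1)` (with `n = C.card`) is an embroidery of the
configuration `C`. -/
def IsEmbroidery (C : Finset (ℤ × ℤ)) (d : ℕ → (ℤ × ℤ) × (ℤ × ℤ)) : Prop :=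
  (∀ i < 2 * C.card, ∃ c ∈ C, diagOf (d i) = infDiag c ∨ diagOf (d i) = supDiag c) ∧
  (∀ c ∈ C, ∃! i, i < 2 * C.card ∧ diagOf (d i) = infDiag c) ∧
  (∀ c ∈ C, ∃! i, i < 2 * C.card ∧ diagOf (d i) = supDiag c) ∧
  (∀ c ∈ C, ∀ i j, i < 2 * C.card → j < 2 * C.card →
    diagOf (d i) = infDiag c → diagOf (d j) = supDiag c → i < j) ∧
  (∀ i, i + 1 < 2 * C.card → Adj (d i).2 (d (i + 1)).1)

/-- A closed embroidery: moreover the end of the last diagonal is adjacent to the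
start of the first one. -/
def IsClosedEmbroidery (C : Finset (ℤ × ℤ)) (d : ℕ → (ℤ × ℤ) × (ℤ × ℤ)) : Prop :=
  IsEmbroidery C d ∧ Adj (d (2 * C.card - 1)).2 (d 0).1

/-- A configuration is brodable if it admits an embroidery. -/
def Brodable (C : Finset (ℤ × ℤ)) : Prop := ∃ d, IsEmbroidery C d

/-- A configuration is strongly brodable if it admits a closed embroidery. -/
def StronglyBrodable (C : Finset (ℤ × ℤ)) : Prop := ∃ d, IsClosedEmbroidery C d

/-- Two cells are 4-adjacent if they differ by `(±1, 0)` or `(0, ±1)`. -/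
def FourAdj (p q : ℤ × ℤ) : Prop := (p.1 - q.1) ^ 2 + (p.2 - q.2) ^ 2 = 1

/-- A configuration is 4-connected if it is nonempty and any two of its cells
are joined by a chain of cells of the configuration in which consecutive cells
are 4-adjacent. -/
def FourConnected (C : Finset (ℤ × ℤ)) : Prop :=
  C.Nonempty ∧ ∀ p ∈ C, ∀ q ∈ C,
    Relation.ReflTransGen (fun a b => a ∈ C ∧ b ∈ C ∧ FourAdj a b) p q


-- aux
abbrev Cell := ℤ × ℤ
def junkS : Cell × Cell := ((0,0),(0,0))

inductive Dir | R | L | U | D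
deriving DecidableEq

def dv : Dir → Cell
  | .R => (1,0) | .L => (-1,0) | .U => (0,1) | .D => (0,-1)

def infS (c : Cell) : Dir → Cell × Cell
  | .U => (c, (c.1+1, c.2+1))
  | .R => (c, (c.1+1, c.2+1))
  | .L => ((c.1+1, c.2+1), c)
  | .D => ((c.1+1, c.2+1), c)

def supS (c : Cell) : Dir → Cell × Cell
  | .U => ((c.1, c.2+1), (c.1+1, c.2))
  | .L => ((c.1, c.2+1), (c.1+1, c.2))
  | .R => ((c.1+1, c.2), (c.1, c.2+1))
  | .D => ((c.1+1, c.2), (c.1, c.2+1))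

lemma diag_infS (c : Cell) (d : Dir) : diagOf (infS c d) = infDiag c := by
  cases d <;> simp [diagOf, infS, infDiag, Sym2.eq_swap]

lemma diag_supS (c : Cell) (d : Dir) : diagOf (supS c d) = supDiag c := by
  cases d <;> simp [diagOf, supS, supDiag, Sym2.eq_swap]

lemma infDiag_inj {c c' : Cell} (h : infDiag c = infDiag c') : c = c' := by
  rw [infDiag, infDiag, Sym2.eq_iff] at h
  rw [Prod.ext_iff]
  simp only [Prod.ext_iff, Prod.fst, Prod.snd] at h
  omega

lemma supDiag_inj {c c' : Cell} (h : supDiag c = supDiag c') : c = c' := by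
  rw [supDiag, supDiag, Sym2.eq_iff] at h
  rw [Prod.ext_iff]
  simp only [Prod.ext_iff] at h
  omega

lemma infDiag_ne_supDiag (c c' : Cell) : infDiag c ≠ supDiag c' := by
  intro h
  rw [infDiag, supDiag, Sym2.eq_iff] at h
  simp only [Prod.ext_iff] at h
  omega

/-- junction adjacencies -/
lemma adjJ1 (c : Cell) (m d : Dir) : Adj (infS c m).2 (infS (c + dv d) d).1 := by
  cases m <;> cases d <;>
    simp [Adj, infS, dv, Prod.fst_add, Prod.snd_add]

lemma adjJ2 (c : Cell) (m d : Dir) : Adj (supS (c + dv d) d).2 (supS c m).1 := by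
  cases m <;> cases d <;>
    simp [Adj, supS, dv, Prod.fst_add, Prod.snd_add]

lemma adjJ3 (c : Cell) (d d' : Dir) (h : d ≠ d') :
    Adj (supS (c + dv d) d).2 (infS (c + dv d') d').1 := by
  cases d <;> cases d' <;> first
    | exact absurd rfl h
    | (simp [Adj, supS, infS, dv, Prod.fst_add, Prod.snd_add])

lemma adjJ4 (c : Cell) (m : Dir) : Adj (infS c m).2 (supS c m).1 := by
  cases m <;> simp [Adj, infS, supS]

def Spec (S : Finset Cell) (L : List (Cell × Cell)) : Prop :=
  (∀ e ∈ L, ∃ c ∈ S, diagOf e = infDiag c ∨ diagOf e = supDiag c) ∧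
  (∀ c ∈ S, ∃ i, i < L.length ∧ diagOf (L.getD i junkS) = infDiag c ∧
      ∀ j, j < L.length → diagOf (L.getD j junkS) = infDiag c → j = i) ∧
  (∀ c ∈ S, ∃ i, i < L.length ∧ diagOf (L.getD i junkS) = supDiag c ∧
      ∀ j, j < L.length → diagOf (L.getD j junkS) = supDiag c → j = i) ∧
  (∀ c ∈ S, ∀ i j, i < L.length → j < L.length →
      diagOf (L.getD i junkS) = infDiag c → diagOf (L.getD j junkS) = supDiag c → i < j) ∧
  List.Chain' (fun e f => Adj e.2 f.1) L

lemma getD_mem {L : List (Cell × Cell)} {i : ℕ} (h : i < L.length) :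
    L.getD i junkS ∈ L := by
  rw [List.getD_eq_getElem L junkS h]
  exact List.getElem_mem h

/-- an element of the list on the `S2` side cannot carry a diagonal of a cell of `S1` -/
lemma no_cross {S1 S2 : Finset Cell} {L : List (Cell × Cell)}
    (hcov : ∀ e ∈ L, ∃ c ∈ S2, diagOf e = infDiag c ∨ diagOf e = supDiag c)
    (hd : Disjoint S1 S2) {c : Cell} (hc : c ∈ S1) {e : Cell × Cell} (he : e ∈ L) :
    diagOf e ≠ infDiag c ∧ diagOf e ≠ supDiag c := by
  obtain ⟨c2, hc2, h2⟩ := hcov e he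
  have hne : c2 ≠ c := by
    rintro rfl
    exact (Finset.disjoint_left.mp hd hc) hc2
  constructor
  · rcases h2 with h | h <;> rw [h]
    · exact fun hh => hne (infDiag_inj hh.symm).symm
    · exact fun hh => (infDiag_ne_supDiag c c2) hh.symm
  · rcases h2 with h | h <;> rw [h]
    · exact fun hh => (infDiag_ne_supDiag c2 c) hh
    · exact fun hh => hne (supDiag_inj hh.symm).symm

lemma spec_append {S1 S2 : Finset Cell} {L1 L2 : List (Cell × Cell)}
    (h1 : Spec S1 L1) (h2 : Spec S2 L2) (hd : Disjoint S1 S2)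
    (hj : ∀ x ∈ L1.getLast?, ∀ y ∈ L2.head?, Adj x.2 y.1) :
    Spec (S1 ∪ S2) (L1 ++ L2) := by
  obtain ⟨cov1, inf1, sup1, ord1, ch1⟩ := h1
  obtain ⟨cov2, inf2, sup2, ord2, ch2⟩ := h2
  have len : (L1 ++ L2).length = L1.length + L2.length := List.length_append
  have getD1 : ∀ i, i < L1.length → (L1 ++ L2).getD i junkS = L1.getD i junkS :=
    fun i hi => List.getD_append _ _ _ _ hi
  have getD2 : ∀ i, L1.length ≤ i → (L1 ++ L2).getD i junkS = L2.getD (i - L1.length) junkS :=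
    fun i hi => List.getD_append_right _ _ _ _ hi
  refine ⟨?_, ?_, ?_, ?_, ?_⟩
  · intro e he
    rcases List.mem_append.mp he with h | h
    · obtain ⟨c, hc, hh⟩ := cov1 e h; exact ⟨c, Finset.mem_union_left _ hc, hh⟩
    · obtain ⟨c, hc, hh⟩ := cov2 e h; exact ⟨c, Finset.mem_union_right _ hc, hh⟩
  · intro c hc
    rcases Finset.mem_union.mp hc with hc | hc
    · obtain ⟨i, hi, hdi, huniq⟩ := inf1 c hc
      refine ⟨i, by omega, by rw [getD1 i hi]; exact hdi, ?_⟩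
      intro j hj hdj
      by_cases hjl : j < L1.length
      · exact huniq j hjl (by rwa [getD1 j hjl] at hdj)
      · exfalso
        push_neg at hjl
        rw [getD2 j hjl] at hdj
        have hmem : L2.getD (j - L1.length) junkS ∈ L2 := getD_mem (by omega)
        exact (no_cross cov2 hd hc hmem).1 hdj
    · obtain ⟨i, hi, hdi, huniq⟩ := inf2 c hc
      refine ⟨L1.length + i, by omega, ?_, ?_⟩
      · rw [getD2 _ (by omega)]; simpa using hdi
      · intro j hj hdj
        by_cases hjl : j < L1.length
        · exfalso
          rw [getD1 j hjl] at hdj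
          have hmem : L1.getD j junkS ∈ L1 := getD_mem hjl
          exact (no_cross cov1 hd.symm hc hmem).1 hdj
        · push_neg at hjl
          rw [getD2 j hjl] at hdj
          have := huniq (j - L1.length) (by omega) hdj
          omega
  · intro c hc
    rcases Finset.mem_union.mp hc with hc | hc
    · obtain ⟨i, hi, hdi, huniq⟩ := sup1 c hc
      refine ⟨i, by omega, by rw [getD1 i hi]; exact hdi, ?_⟩
      intro j hj hdj
      by_cases hjl : j < L1.length
      · exact huniq j hjl (by rwa [getD1 j hjl] at hdj)
      · exfalso
        push_neg at hjl
        rw [getD2 j hjl] at hdj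
        have hmem : L2.getD (j - L1.length) junkS ∈ L2 := getD_mem (by omega)
        exact (no_cross cov2 hd hc hmem).2 hdj
    · obtain ⟨i, hi, hdi, huniq⟩ := sup2 c hc
      refine ⟨L1.length + i, by omega, ?_, ?_⟩
      · rw [getD2 _ (by omega)]; simpa using hdi
      · intro j hj hdj
        by_cases hjl : j < L1.length
        · exfalso
          rw [getD1 j hjl] at hdj
          have hmem : L1.getD j junkS ∈ L1 := getD_mem hjl
          exact (no_cross cov1 hd.symm hc hmem).2 hdj
        · push_neg at hjl
          rw [getD2 j hjl] at hdj
          have := huniq (j - L1.length) (by omega) hdj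
          omega
  · intro c hc i j hi hj hdi hdj
    rcases Finset.mem_union.mp hc with hc | hc
    · have hil : i < L1.length := by
        by_contra hh
        push_neg at hh
        rw [getD2 i hh] at hdi
        exact (no_cross cov2 hd hc (getD_mem (by omega))).1 hdi
      have hjl : j < L1.length := by
        by_contra hh
        push_neg at hh
        rw [getD2 j hh] at hdj
        exact (no_cross cov2 hd hc (getD_mem (by omega))).2 hdj
      exact ord1 c hc i j hil hjl (by rwa [getD1 i hil] at hdi) (by rwa [getD1 j hjl] at hdj)
    · have hil : L1.length ≤ i := by
        by_contra hh
        push_neg at hh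
        rw [getD1 i hh] at hdi
        exact (no_cross cov1 hd.symm hc (getD_mem hh)).1 hdi
      have hjl : L1.length ≤ j := by
        by_contra hh
        push_neg at hh
        rw [getD1 j hh] at hdj
        exact (no_cross cov1 hd.symm hc (getD_mem hh)).2 hdj
      have := ord2 c hc (i - L1.length) (j - L1.length) (by omega) (by omega)
        (by rwa [getD2 i hil] at hdi) (by rwa [getD2 j hjl] at hdj)
      omega
  · exact List.isChain_append.mpr ⟨ch1, ch2, hj⟩

lemma spec_wrap {S : Finset Cell} {M : List (Cell × Cell)} {c : Cell} {e1 e2 : Cell × Cell}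
    (hM : Spec S M) (hc : c ∉ S)
    (he1 : diagOf e1 = infDiag c) (he2 : diagOf e2 = supDiag c)
    (hj1 : ∀ y ∈ M.head?, Adj e1.2 y.1)
    (hj2 : ∀ x ∈ M.getLast?, Adj x.2 e2.1)
    (hj0 : Adj e1.2 e2.1) :
    Spec (insert c S) (e1 :: (M ++ [e2])) := by
  obtain ⟨cov, hinf, hsup, hord, hch⟩ := hM
  set L : List (Cell × Cell) := e1 :: (M ++ [e2]) with hL
  have hlen : L.length = M.length + 2 := by simp [hL]
  have hdisj : Disjoint ({c} : Finset Cell) S := by simpa using hc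
  have hget0 : L.getD 0 junkS = e1 := rfl
  have hgetMid : ∀ i, i < M.length → L.getD (i + 1) junkS = M.getD i junkS := by
    intro i hi
    show (M ++ [e2]).getD i junkS = M.getD i junkS
    exact List.getD_append _ _ _ _ hi
  have hgetLast : L.getD (M.length + 1) junkS = e2 := by
    show (M ++ [e2]).getD M.length junkS = e2
    rw [List.getD_append_right _ _ _ _ (le_refl _)]
    simp
  -- classification of any index
  have hclass : ∀ j, j < L.length → j = 0 ∨ (∃ i, i < M.length ∧ j = i + 1) ∨ j = M.length + 1 := by
    intro j hj
    rw [hlen] at hj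
    rcases Nat.eq_zero_or_pos j with h0 | hpos
    · exact Or.inl h0
    · by_cases hj2 : j = M.length + 1
      · exact Or.inr (Or.inr hj2)
      · exact Or.inr (Or.inl ⟨j - 1, by omega, by omega⟩)
  have hMdiag : ∀ i, i < M.length →
      (diagOf (M.getD i junkS) ≠ infDiag c ∧ diagOf (M.getD i junkS) ≠ supDiag c) := by
    intro i hi
    exact no_cross cov hdisj (Finset.mem_singleton_self c) (getD_mem hi)
  refine ⟨?_, ?_, ?_, ?_, ?_⟩
  · intro e he
    rcases List.mem_cons.mp he with rfl | he
    · exact ⟨c, Finset.mem_insert_self _ _, Or.inl he1⟩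
    rcases List.mem_append.mp he with he | he
    · obtain ⟨c', hc', hh⟩ := cov e he
      exact ⟨c', Finset.mem_insert_of_mem hc', hh⟩
    · rcases List.mem_singleton.mp he with rfl
      exact ⟨c, Finset.mem_insert_self _ _, Or.inr he2⟩
  · intro c' hc'
    rcases Finset.mem_insert.mp hc' with rfl | hc'
    · refine ⟨0, by omega, by rw [hget0]; exact he1, ?_⟩
      intro j hj hdj
      rcases hclass j hj with rfl | ⟨i, hi, rfl⟩ | rfl
      · rfl
      · rw [hgetMid i hi] at hdj
        exact absurd hdj (hMdiag i hi).1
      · rw [hgetLast] at hdj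
        rw [he2] at hdj
        exact absurd hdj.symm (infDiag_ne_supDiag c' c')
    · obtain ⟨i, hi, hdi, huniq⟩ := hinf c' hc'
      refine ⟨i + 1, by omega, by rw [hgetMid i hi]; exact hdi, ?_⟩
      intro j hj hdj
      rcases hclass j hj with rfl | ⟨k, hk, rfl⟩ | rfl
      · rw [hget0, he1] at hdj
        exact absurd (infDiag_inj hdj) (by rintro rfl; exact hc hc')
      · rw [hgetMid k hk] at hdj
        exact congrArg (· + 1) (huniq k hk hdj)
      · rw [hgetLast, he2] at hdj
        exact absurd hdj.symm (infDiag_ne_supDiag c' c)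
  · intro c' hc'
    rcases Finset.mem_insert.mp hc' with rfl | hc'
    · refine ⟨M.length + 1, by omega, by rw [hgetLast]; exact he2, ?_⟩
      intro j hj hdj
      rcases hclass j hj with rfl | ⟨i, hi, rfl⟩ | rfl
      · rw [hget0, he1] at hdj
        exact absurd hdj (infDiag_ne_supDiag c' c')
      · rw [hgetMid i hi] at hdj
        exact absurd hdj (hMdiag i hi).2
      · rfl
    · obtain ⟨i, hi, hdi, huniq⟩ := hsup c' hc'
      refine ⟨i + 1, by omega, by rw [hgetMid i hi]; exact hdi, ?_⟩
      intro j hj hdj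
      rcases hclass j hj with rfl | ⟨k, hk, rfl⟩ | rfl
      · rw [hget0, he1] at hdj
        exact absurd hdj (infDiag_ne_supDiag c c')
      · rw [hgetMid k hk] at hdj
        exact congrArg (· + 1) (huniq k hk hdj)
      · rw [hgetLast, he2] at hdj
        exact absurd (supDiag_inj hdj) (by rintro rfl; exact hc hc')
  · intro c' hc' i j hi hj hdi hdj
    rcases Finset.mem_insert.mp hc' with rfl | hc'
    · -- inf of c is only at 0, sup only at end
      have hi0 : i = 0 := by
        rcases hclass i hi with rfl | ⟨k, hk, rfl⟩ | rfl
        · rfl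
        · rw [hgetMid k hk] at hdi; exact absurd hdi (hMdiag k hk).1
        · rw [hgetLast, he2] at hdi
          exact absurd hdi.symm (infDiag_ne_supDiag c' c')
      have hjE : j = M.length + 1 := by
        rcases hclass j hj with rfl | ⟨k, hk, rfl⟩ | rfl
        · rw [hget0, he1] at hdj; exact absurd hdj (infDiag_ne_supDiag c' c')
        · rw [hgetMid k hk] at hdj; exact absurd hdj (hMdiag k hk).2
        · rfl
      omega
    · have hiM : ∃ k, k < M.length ∧ i = k + 1 := by
        rcases hclass i hi with rfl | h | rfl
        · rw [hget0, he1] at hdi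
          exact absurd (infDiag_inj hdi) (by rintro rfl; exact hc hc')
        · exact h
        · rw [hgetLast, he2] at hdi
          exact absurd hdi.symm (infDiag_ne_supDiag c' c)
      have hjM : (∃ k, k < M.length ∧ j = k + 1) ∨ j = M.length + 1 := by
        rcases hclass j hj with rfl | h | rfl
        · rw [hget0, he1] at hdj
          exact absurd hdj (infDiag_ne_supDiag c c')
        · exact Or.inl h
        · exact Or.inr rfl
      obtain ⟨k, hk, rfl⟩ := hiM
      rcases hjM with ⟨k', hk', rfl⟩ | rfl
      · rw [hgetMid k hk] at hdi
        rw [hgetMid k' hk'] at hdj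
        have := hord c' hc' k k' hk hk' hdi hdj
        omega
      · omega
  · refine List.isChain_cons.mpr ⟨?_, List.isChain_append.mpr ⟨hch, List.isChain_singleton _, ?_⟩⟩
    · intro y hy
      cases M with
      | nil =>
        simp only [List.nil_append, List.head?_cons, Option.mem_some_iff] at hy
        subst hy
        exact hj0
      | cons m0 tl =>
        simp only [List.cons_append, List.head?_cons, Option.mem_some_iff] at hy
        subst hy
        exact hj1 _ rfl
    · intro x hx y hy
      rw [List.head?_singleton] at hy
      cases hy
      exact hj2 x hx

def Step (T : Finset Cell) (x y : Cell) : Prop := x ∈ T ∧ y ∈ T ∧ FourAdj x y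
def Reach (T : Finset Cell) (x y : Cell) : Prop := Relation.ReflTransGen (Step T) x y

lemma fourAdj_symm {x y : Cell} (h : FourAdj x y) : FourAdj y x := by
  rw [FourAdj] at h ⊢; ring_nf; ring_nf at h; linarith

lemma step_symm {T : Finset Cell} {x y : Cell} (h : Step T x y) : Step T y x :=
  ⟨h.2.1, h.1, fourAdj_symm h.2.2⟩

lemma reach_symm {T : Finset Cell} {x y : Cell} (h : Reach T x y) : Reach T y x :=
  by
  unfold Reach at h ⊢
  induction h with
  | refl => exact Relation.ReflTransGen.refl
  | tail _ hs ih => exact Relation.ReflTransGen.head (step_symm hs) ih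

lemma sq_sum_one {u v : ℤ} (h : u^2 + v^2 = 1) :
    (u = 1 ∧ v = 0) ∨ (u = -1 ∧ v = 0) ∨ (u = 0 ∧ v = 1) ∨ (u = 0 ∧ v = -1) := by
  have hu1 : -1 ≤ u := by nlinarith [sq_nonneg v, sq_nonneg (u+1)]
  have hu2 : u ≤ 1 := by nlinarith [sq_nonneg v, sq_nonneg (u-1)]
  have hv1 : -1 ≤ v := by nlinarith [sq_nonneg u, sq_nonneg (v+1)]
  have hv2 : v ≤ 1 := by nlinarith [sq_nonneg u, sq_nonneg (v-1)]
  interval_cases u <;> interval_cases v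
  all_goals first
    | (exact absurd h (by decide))
    | norm_num

lemma fourAdj_dir {c x : Cell} (h : FourAdj c x) : ∃ d : Dir, x = c + dv d := by
  have h' : (c.1-x.1)^2 + (c.2-x.2)^2 = 1 := h
  rcases sq_sum_one h' with ⟨h1, h2⟩ | ⟨h1, h2⟩ | ⟨h1, h2⟩ | ⟨h1, h2⟩
  · exact ⟨.L, Prod.ext (by simp [dv]; omega) (by simp [dv]; omega)⟩
  · exact ⟨.R, Prod.ext (by simp [dv]; omega) (by simp [dv]; omega)⟩
  · exact ⟨.D, Prod.ext (by simp [dv]; omega) (by simp [dv]; omega)⟩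
  · exact ⟨.U, Prod.ext (by simp [dv]; omega) (by simp [dv]; omega)⟩

/-- every cell of `S.erase c` is reachable inside `S.erase c` from some 4-neighbour of `c`. -/
lemma escape {S : Finset Cell} {c : Cell} (hS : FourConnected S) (hc : c ∈ S)
    {x : Cell} (hx : x ∈ S.erase c) :
    ∃ d : Dir, c + dv d ∈ S.erase c ∧ Reach (S.erase c) (c + dv d) x := by
  have hpath : Relation.ReflTransGen (fun a b => a ∈ S ∧ b ∈ S ∧ FourAdj a b) c x :=
    hS.2 c hc x (Finset.mem_of_mem_erase hx)
  revert hx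
  induction hpath with
  | refl =>
    intro hx
    exact absurd rfl (Finset.ne_of_mem_erase hx)
  | @tail b y hcb hby ih =>
    intro hy
    obtain ⟨hbS, hyS, hadj⟩ := hby
    by_cases hbc : b = c
    · subst hbc
      obtain ⟨d, hd⟩ := fourAdj_dir hadj
      refine ⟨d, hd ▸ hy, ?_⟩
      rw [hd]
      exact Relation.ReflTransGen.refl
    · have hbE : b ∈ S.erase c := Finset.mem_erase.mpr ⟨hbc, hbS⟩
      obtain ⟨d, hd1, hd2⟩ := ih hbE
      exact ⟨d, hd1, hd2.tail ⟨hbE, hy, hadj⟩⟩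

attribute [local instance] Classical.propDecidable

noncomputable def comp (E : Finset Cell) (r : Cell) : Finset Cell :=
  E.filter (fun x => Reach E r x)

lemma mem_comp {E : Finset Cell} {r x : Cell} : x ∈ comp E r ↔ x ∈ E ∧ Reach E r x :=
  Finset.mem_filter

lemma comp_subset {E : Finset Cell} {r : Cell} : comp E r ⊆ E := Finset.filter_subset _ _

lemma reach_comp {E : Finset Cell} {r : Cell} (hr : r ∈ E) :
    ∀ {x}, Reach E r x → Reach (comp E r) r x := by
  intro x h
  induction h with
  | refl => exact Relation.ReflTransGen.refl
  | @tail b y hb hs ih =>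
    refine ih.tail ⟨?_, ?_, hs.2.2⟩
    · exact mem_comp.mpr ⟨hs.1, hb⟩
    · exact mem_comp.mpr ⟨hs.2.1, hb.tail hs⟩

lemma comp_connected {E : Finset Cell} {r : Cell} (hr : r ∈ E) :
    FourConnected (comp E r) := by
  have hrc : r ∈ comp E r := mem_comp.mpr ⟨hr, Relation.ReflTransGen.refl⟩
  refine ⟨⟨r, hrc⟩, ?_⟩
  intro p hp q hq
  have hp' : Reach (comp E r) r p := reach_comp hr (mem_comp.mp hp).2
  have hq' : Reach (comp E r) r q := reach_comp hr (mem_comp.mp hq).2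
  exact (reach_symm hp').trans hq'

lemma comp_eq_or_disjoint {E : Finset Cell} {r r' : Cell} :
    comp E r = comp E r' ∨ Disjoint (comp E r) (comp E r') := by
  by_cases h : Disjoint (comp E r) (comp E r')
  · exact Or.inr h
  · left
    rw [Finset.not_disjoint_iff] at h
    obtain ⟨z, hz, hz'⟩ := h
    have h1 : Reach E r z := (mem_comp.mp hz).2
    have h2 : Reach E r' z := (mem_comp.mp hz').2
    have hrr' : Reach E r' r := h2.trans (reach_symm h1)
    ext x
    rw [mem_comp, mem_comp]
    constructor
    · rintro ⟨hx, hr⟩; exact ⟨hx, hrr'.trans hr⟩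
    · rintro ⟨hx, hr⟩; exact ⟨hx, ((reach_symm hrr').trans hr : Reach E r x)⟩

lemma spec_nil : Spec (∅ : Finset Cell) [] := by
  refine ⟨?_, ?_, ?_, ?_, List.isChain_nil⟩ <;> simp

lemma head?_or_cases {α : Type*} {o1 o2 : Option α} {y : α} (h : y ∈ o1.or o2) :
    y ∈ o1 ∨ y ∈ o2 := by
  cases o1 <;> simp_all [Option.or]

set_option maxHeartbeats 2000000 in
lemma key : ∀ (n : ℕ) (S : Finset Cell), S.card ≤ n → FourConnected S → ∀ c ∈ S, ∀ m : Dir,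
    ∃ L : List (Cell × Cell), Spec S L ∧ L.length = 2 * S.card ∧
      L.head? = some (infS c m) ∧ L.getLast? = some (supS c m) := by
  intro n
  induction n with
  | zero =>
    intro S hcard _ c hc _
    have := Finset.card_pos.mpr ⟨c, hc⟩
    omega
  | succ n ih =>
    intro S hcard hconn c hc m
    classical
    set E := S.erase c with hE
    have hcE : c ∉ E := Finset.notMem_erase c S
    have hcardS : 1 ≤ S.card := Finset.card_pos.mpr ⟨c, hc⟩
    have hcardE' : E.card = S.card - 1 := Finset.card_erase_of_mem hc
    have hcardE : E.card ≤ n := by omega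
    -- raw components
    have hcnd : ∀ d : Dir, ∃ A : Finset Cell,
        (A = ∅ ∨ (A = comp E (c + dv d) ∧ c + dv d ∈ E)) ∧
        (∀ x, x ∈ A ↔ (c + dv d ∈ E ∧ x ∈ E ∧ Reach E (c + dv d) x)) := by
      intro d
      by_cases h : c + dv d ∈ E
      · refine ⟨comp E (c + dv d), Or.inr ⟨rfl, h⟩, ?_⟩
        intro x
        rw [mem_comp]
        tauto
      · exact ⟨∅, Or.inl rfl, by simp [h]⟩
    obtain ⟨cR, hcR, hcRm⟩ := hcnd .R
    obtain ⟨cL, hcL, hcLm⟩ := hcnd .L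
    obtain ⟨cU, hcU, hcUm⟩ := hcnd .U
    obtain ⟨cD, hcD, hcDm⟩ := hcnd .D
    -- saturation
    have sat : ∀ (A : Finset Cell),
        (A = ∅ ∨ ∃ r, A = comp E r ∧ r ∈ E) →
        ∀ x ∈ A, ∀ y, y ∈ E → Reach E x y → y ∈ A := by
      rintro A (rfl | ⟨r, rfl, hr⟩) x hx y hyE hxy
      · simp at hx
      · exact mem_comp.mpr ⟨hyE, (mem_comp.mp hx).2.trans hxy⟩
    have satR := sat cR (by rcases hcR with h | ⟨h, hm⟩; exact Or.inl h; exact Or.inr ⟨_, h, hm⟩)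
    have satL := sat cL (by rcases hcL with h | ⟨h, hm⟩; exact Or.inl h; exact Or.inr ⟨_, h, hm⟩)
    have satU := sat cU (by rcases hcU with h | ⟨h, hm⟩; exact Or.inl h; exact Or.inr ⟨_, h, hm⟩)
    -- subtracting a saturated set from a (possibly empty) component
    have comp_sdiff : ∀ (A B : Finset Cell) (r : Cell),
        (A = ∅ ∨ (A = comp E r ∧ r ∈ E)) →
        (∀ x ∈ B, ∀ y, y ∈ E → Reach E x y → y ∈ B) →
        (A \ B = ∅ ∨ (A \ B = comp E r ∧ r ∈ E)) := by
      intro A B r hA hB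
      rcases hA with rfl | ⟨rfl, hr⟩
      · left; simp
      · rcases Finset.eq_empty_or_nonempty (comp E r \ B) with h | ⟨a, ha⟩
        · exact Or.inl h
        · right
          refine ⟨?_, hr⟩
          rw [Finset.sdiff_eq_self_iff_disjoint, Finset.disjoint_left]
          intro z hz hzB
          rw [Finset.mem_sdiff] at ha
          have hza : Reach E z a := (reach_symm (mem_comp.mp hz).2).trans (mem_comp.mp ha.1).2
          exact ha.2 (hB z hzB a (mem_comp.mp ha.1).1 hza)
    -- disjointified components
    set TR := cR with hTR
    set TL := cL \ cR with hTL
    set TU := cU \ (cR ∪ cL) with hTU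
    set TD := cD \ (cR ∪ cL ∪ cU) with hTD
    have satRL : ∀ x ∈ cR ∪ cL, ∀ y, y ∈ E → Reach E x y → y ∈ cR ∪ cL := by
      intro x hx y hyE hxy
      rcases Finset.mem_union.mp hx with h | h
      · exact Finset.mem_union_left _ (satR x h y hyE hxy)
      · exact Finset.mem_union_right _ (satL x h y hyE hxy)
    have satRLU : ∀ x ∈ cR ∪ cL ∪ cU, ∀ y, y ∈ E → Reach E x y → y ∈ cR ∪ cL ∪ cU := by
      intro x hx y hyE hxy
      rcases Finset.mem_union.mp hx with h | h
      · exact Finset.mem_union_left _ (satRL x h y hyE hxy)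
      · exact Finset.mem_union_right _ (satU x h y hyE hxy)
    have hnR : TR = ∅ ∨ (TR = comp E (c + dv .R) ∧ c + dv .R ∈ E) := hcR
    have hnL : TL = ∅ ∨ (TL = comp E (c + dv .L) ∧ c + dv .L ∈ E) :=
      comp_sdiff cL cR _ hcL satR
    have hnU : TU = ∅ ∨ (TU = comp E (c + dv .U) ∧ c + dv .U ∈ E) :=
      comp_sdiff cU (cR ∪ cL) _ hcU satRL
    have hnD : TD = ∅ ∨ (TD = comp E (c + dv .D) ∧ c + dv .D ∈ E) :=
      comp_sdiff cD (cR ∪ cL ∪ cU) _ hcD satRLU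
    -- cover
    have hcover : TR ∪ (TL ∪ (TU ∪ TD)) = E := by
      apply Finset.Subset.antisymm
      · intro x hx
        have hsub : ∀ A B : Finset Cell, A \ B ⊆ A := fun A B => Finset.sdiff_subset
        rcases Finset.mem_union.mp hx with h | h
        · exact ((hcRm x).mp h).2.1
        rcases Finset.mem_union.mp h with h | h
        · exact ((hcLm x).mp (hsub _ _ h)).2.1
        rcases Finset.mem_union.mp h with h | h
        · exact ((hcUm x).mp (hsub _ _ h)).2.1
        · exact ((hcDm x).mp (hsub _ _ h)).2.1
      · intro x hx
        obtain ⟨d, hd1, hd2⟩ := escape hconn hc hx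
        have hxC : ∀ d' : Dir, (c + dv d' ∈ E ∧ Reach E (c + dv d') x) →
            (x ∈ cR ∨ x ∈ cL ∨ x ∈ cU ∨ x ∈ cD) := by
          intro d' ⟨h1, h2⟩
          cases d'
          · exact Or.inl ((hcRm x).mpr ⟨h1, hx, h2⟩)
          · exact Or.inr (Or.inl ((hcLm x).mpr ⟨h1, hx, h2⟩))
          · exact Or.inr (Or.inr (Or.inl ((hcUm x).mpr ⟨h1, hx, h2⟩)))
          · exact Or.inr (Or.inr (Or.inr ((hcDm x).mpr ⟨h1, hx, h2⟩)))
        have hmem := hxC d ⟨hd1, hd2⟩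
        by_cases hR : x ∈ cR
        · exact Finset.mem_union_left _ hR
        by_cases hL : x ∈ cL
        · exact Finset.mem_union_right _ (Finset.mem_union_left _
            (Finset.mem_sdiff.mpr ⟨hL, hR⟩))
        by_cases hU : x ∈ cU
        · refine Finset.mem_union_right _ (Finset.mem_union_right _
            (Finset.mem_union_left _ (Finset.mem_sdiff.mpr ⟨hU, ?_⟩)))
          simp [hR, hL]
        have hD : x ∈ cD := by rcases hmem with h | h | h | h <;> first | exact h | exact absurd h (by assumption)
        refine Finset.mem_union_right _ (Finset.mem_union_right _
          (Finset.mem_union_right _ (Finset.mem_sdiff.mpr ⟨hD, ?_⟩)))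
        simp [hR, hL, hU]
    -- pairwise disjointness needed for appends
    have dUD : Disjoint TU TD := by
      rw [Finset.disjoint_left]
      intro z hz hz'
      rw [hTU, Finset.mem_sdiff] at hz
      rw [hTD, Finset.mem_sdiff] at hz'
      exact hz'.2 (by simp [hz.1])
    have dLUD : Disjoint TL (TU ∪ TD) := by
      rw [Finset.disjoint_left]
      intro z hz hz'
      rw [hTL, Finset.mem_sdiff] at hz
      rcases Finset.mem_union.mp hz' with h | h
      · rw [hTU, Finset.mem_sdiff] at h
        exact h.2 (by simp [hz.1])
      · rw [hTD, Finset.mem_sdiff] at h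
        exact h.2 (by simp [hz.1])
    have dRLUD : Disjoint TR (TL ∪ (TU ∪ TD)) := by
      rw [Finset.disjoint_left]
      intro z hz hz'
      rcases Finset.mem_union.mp hz' with h | h
      · rw [hTL, Finset.mem_sdiff] at h
        exact h.2 hz
      rcases Finset.mem_union.mp h with h | h
      · rw [hTU, Finset.mem_sdiff] at h
        exact h.2 (by rw [hTR] at hz; simp [hz])
      · rw [hTD, Finset.mem_sdiff] at h
        exact h.2 (by rw [hTR] at hz; simp [hz])
    -- walks for the four components
    have mkW : ∀ (A : Finset Cell) (d : Dir),
        (A = ∅ ∨ (A = comp E (c + dv d) ∧ c + dv d ∈ E)) →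
        ∃ W : List (Cell × Cell), Spec A W ∧ W.length = 2 * A.card ∧
          (∀ y ∈ W.head?, y = infS (c + dv d) d) ∧
          (∀ x ∈ W.getLast?, x = supS (c + dv d) d) := by
      intro A d hA
      rcases hA with rfl | ⟨rfl, hmem⟩
      · exact ⟨[], spec_nil, by simp, by simp, by simp⟩
      · have hroot : c + dv d ∈ comp E (c + dv d) :=
          mem_comp.mpr ⟨hmem, Relation.ReflTransGen.refl⟩
        obtain ⟨W, hs, hl, hh, hla⟩ := ih _
          (le_trans (Finset.card_le_card comp_subset) hcardE)
          (comp_connected hmem) _ hroot d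
        refine ⟨W, hs, hl, ?_, ?_⟩
        · intro y hy; rw [hh] at hy; exact (Option.mem_some_iff.mp hy).symm
        · intro x hx; rw [hla] at hx; exact (Option.mem_some_iff.mp hx).symm
    obtain ⟨WR, sR, lR, hR1, hR2⟩ := mkW TR .R hnR
    obtain ⟨WL, sL, lL, hL1, hL2⟩ := mkW TL .L hnL
    obtain ⟨WU, sU, lU, hU1, hU2⟩ := mkW TU .U hnU
    obtain ⟨WD, sD, lD, hD1, hD2⟩ := mkW TD .D hnD
    -- glue the four walks
    have specUD : Spec (TU ∪ TD) (WU ++ WD) := by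
      refine spec_append sU sD dUD ?_
      intro x hx y hy
      rw [hU2 x hx, hD1 y hy]
      exact adjJ3 c .U .D (by decide)
    have specLUD : Spec (TL ∪ (TU ∪ TD)) (WL ++ (WU ++ WD)) := by
      refine spec_append sL specUD dLUD ?_
      intro x hx y hy
      rw [List.head?_append] at hy
      rcases head?_or_cases hy with h | h
      · rw [hL2 x hx, hU1 y h]
        exact adjJ3 c .L .U (by decide)
      · rw [hL2 x hx, hD1 y h]
        exact adjJ3 c .L .D (by decide)
    have specM : Spec (TR ∪ (TL ∪ (TU ∪ TD))) (WR ++ (WL ++ (WU ++ WD))) := by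
      refine spec_append sR specLUD dRLUD ?_
      intro x hx y hy
      rw [List.head?_append] at hy
      rcases head?_or_cases hy with h | h
      · rw [hR2 x hx, hL1 y h]
        exact adjJ3 c .R .L (by decide)
      rw [List.head?_append] at h
      rcases head?_or_cases h with h' | h'
      · rw [hR2 x hx, hU1 y h']
        exact adjJ3 c .R .U (by decide)
      · rw [hR2 x hx, hD1 y h']
        exact adjJ3 c .R .D (by decide)
    rw [hcover] at specM
    set M := WR ++ (WL ++ (WU ++ WD)) with hM
    -- wrap with the two stitches of c
    have specL : Spec (insert c E) (infS c m :: (M ++ [supS c m])) := by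
      refine spec_wrap specM hcE (diag_infS c m) (diag_supS c m) ?_ ?_ (adjJ4 c m)
      · intro y hy
        rw [hM, List.head?_append] at hy
        rcases head?_or_cases hy with h | h
        · rw [hR1 y h]; exact adjJ1 c m .R
        rw [List.head?_append] at h
        rcases head?_or_cases h with h | h
        · rw [hL1 y h]; exact adjJ1 c m .L
        rw [List.head?_append] at h
        rcases head?_or_cases h with h | h
        · rw [hU1 y h]; exact adjJ1 c m .U
        · rw [hD1 y h]; exact adjJ1 c m .D
      · intro x hx
        rw [hM, List.getLast?_append] at hx
        rcases head?_or_cases hx with h | h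
        swap
        · rw [hR2 x h]; exact adjJ2 c m .R
        rw [List.getLast?_append] at h
        rcases head?_or_cases h with h | h
        swap
        · rw [hL2 x h]; exact adjJ2 c m .L
        rw [List.getLast?_append] at h
        rcases head?_or_cases h with h | h
        swap
        · rw [hU2 x h]; exact adjJ2 c m .U
        · rw [hD2 x h]; exact adjJ2 c m .D
    have hInsert : insert c E = S := Finset.insert_erase hc
    rw [hInsert] at specL
    refine ⟨infS c m :: (M ++ [supS c m]), specL, ?_, ?_, ?_⟩
    · -- length
      have hcards : E.card = TR.card + (TL.card + (TU.card + TD.card)) := by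
        rw [← hcover, Finset.card_union_of_disjoint dRLUD,
          Finset.card_union_of_disjoint dLUD, Finset.card_union_of_disjoint dUD]
      have hMlen : M.length = 2*TR.card + 2*TL.card + 2*TU.card + 2*TD.card := by
        rw [hM]
        simp only [List.length_append, lR, lL, lU, lD]
        omega
      simp only [List.length_cons, List.length_append, List.length_singleton, List.length_nil, hMlen]
      omega
    · rfl
    · show ((infS c m :: M) ++ [supS c m]).getLast? = some (supS c m)
      exact List.getLast?_concat

/-- Every 4-connected configuration admits a closed embroidery whose first diagonal is
the inferior diagonal of any prescribed cell `(a, b)`, traversed from `(a, b)` to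
`(a+1, b+1)`. -/
theorem fourConnected_closedEmbroidery_from_any_cell (C : Finset (ℤ × ℤ))
    (hC : FourConnected C) (a b : ℤ) (hp : (a, b) ∈ C) :
    ∃ d, IsClosedEmbroidery C d ∧ d 0 = ((a, b), (a + 1, b + 1)) := by
  obtain ⟨L, hspec, hlen, hhead, hlast⟩ := key C.card C le_rfl hC (a, b) hp .U
  obtain ⟨cov, hinf, hsup, hord, hch⟩ := hspec
  have hne : L ≠ [] := by
    intro h
    rw [h] at hhead
    simp at hhead
  have hd0 : L.getD 0 junkS = ((a, b), (a + 1, b + 1)) := by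
    cases L with
    | nil => exact absurd rfl hne
    | cons x t =>
      rw [List.head?_cons, Option.some_inj] at hhead
      simpa [infS] using hhead
  refine ⟨fun i => L.getD i junkS, ⟨⟨?_, ?_, ?_, ?_, ?_⟩, ?_⟩, hd0⟩
  · intro i hi
    rw [← hlen] at hi
    exact cov _ (getD_mem hi)
  · intro c hc
    obtain ⟨i, hi, hdi, hu⟩ := hinf c hc
    rw [hlen] at hi
    refine ⟨i, ⟨hi, hdi⟩, ?_⟩
    rintro j ⟨hj, hdj⟩
    exact hu j (by rw [hlen]; exact hj) hdj
  · intro c hc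
    obtain ⟨i, hi, hdi, hu⟩ := hsup c hc
    rw [hlen] at hi
    refine ⟨i, ⟨hi, hdi⟩, ?_⟩
    rintro j ⟨hj, hdj⟩
    exact hu j (by rw [hlen]; exact hj) hdj
  · intro c hc i j hi hj hdi hdj
    rw [← hlen] at hi hj
    exact hord c hc i j hi hj hdi hdj
  · intro i hi
    rw [← hlen] at hi
    have h1 : i < L.length := by omega
    show Adj (L.getD i junkS).2 (L.getD (i+1) junkS).1
    rw [List.getD_eq_getElem L junkS h1, List.getD_eq_getElem L junkS hi]
    have := List.isChain_iff_getElem.mp hch i (by omega)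
    simpa [List.get_eq_getElem] using this
  · -- closedness
    have hlast' : L.getD (2 * C.card - 1) junkS = supS (a, b) .U := by
      rw [List.getLast?_eq_getLast hne, Option.some_inj] at hlast
      have hL1 : 1 ≤ L.length := by
        cases L
        · exact absurd rfl hne
        · simp
      have : 2 * C.card - 1 < L.length := by omega
      rw [List.getD_eq_getElem L junkS this]
      rw [← hlast, List.getLast_eq_getElem]
      congr 1
      omega
    show Adj (L.getD (2 * C.card - 1) junkS).2 (L.getD 0 junkS).1
    rw [hlast', hd0]
    show Adj (a+1, b) (a, b)
    simp [Adj]
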